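/- arXiv:2401.17908 — 3 statements merged into one kernel-verified Lean document; each statement's English description precedes it below -/
import Mathlib

section
/- If T is a bounded invertible positive operator on a Hilbert space H, Π is a bounded invertible operator on H, and Ẑ is the map X ↦ Z X Z⁻¹ with Z = T⁻² Π† T², then for all bounded operators X, Y and unit vectors Ω_s, Ω_t with Π Ω_s = Ω_t and Z⁻¹ Ω_s = Ω_t, one has (X, Ẑ Y)_s = (Π̂ X, Y)_t, where (A,B)_θ = ⟨T_θ A Ω_θ, T_θ B Ω_θ⟩ and Π̂ X = Π X Π⁻¹. -/
open ContinuousLinearMap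

/-- adjoint relation `(X, Ẑ Y)_s = (Π̂ X, Y)_t` for the candidate dual
transport `Z = T_s⁻² Π† T_t²`. -/
theorem stmt_0 {H : Type*} [NormedAddCommGroup H] [InnerProductSpace ℂ H] [CompleteSpace H]
    (Ts Tsinv Tt Ttinv : H →L[ℂ] H)
    (hTsinv : Ts ∘L Tsinv = 1) (hTsinv' : Tsinv ∘L Ts = 1)
    (hTtinv : Tt ∘L Ttinv = 1) (hTtinv' : Ttinv ∘L Tt = 1)
    (hTspos : Ts.IsPositive) (hTtpos : Tt.IsPositive)
    (P Pinv : H →L[ℂ] H)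
    (hP : P ∘L Pinv = 1) (hP' : Pinv ∘L P = 1)
    (Ωs Ωt : H) (hΩs : ‖Ωs‖ = 1) (hΩt : ‖Ωt‖ = 1)
    (hPΩ : P Ωs = Ωt)
    (Z Zinv : H →L[ℂ] H)
    (hZ : Z = Tsinv ∘L Tsinv ∘L (adjoint P) ∘L Tt ∘L Tt)
    (hZZ : Z ∘L Zinv = 1) (hZZ' : Zinv ∘L Z = 1)
    (hZΩ : Zinv Ωs = Ωt)
    (X Y : H →L[ℂ] H) :
    (inner ℂ (Ts (X Ωs)) (Ts ((Z ∘L Y ∘L Zinv) Ωs)) : ℂ)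
      = inner ℂ (Tt ((P ∘L X ∘L Pinv) Ωt)) (Tt (Y Ωt)) := by
  have haTs : adjoint Ts = Ts := hTspos.isSelfAdjoint.adjoint_eq
  have haTt : adjoint Tt = Tt := hTtpos.isSelfAdjoint.adjoint_eq
  have h1 : adjoint Tsinv ∘L Ts = 1 := by
    rw [← haTs, ← adjoint_comp, hTsinv]
    exact star_one _
  have hTsinv_sa : adjoint Tsinv = Tsinv := by
    calc adjoint Tsinv = adjoint Tsinv ∘L (Ts ∘L Tsinv) := by
          rw [hTsinv]; rfl
      _ = (adjoint Tsinv ∘L Ts) ∘L Tsinv := by rw [comp_assoc]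
      _ = Tsinv := by rw [h1]; rfl
  have hTsTsinv : ∀ v : H, Ts (Tsinv v) = v := fun v => by
    have := DFunLike.congr_fun hTsinv v; simpa using this
  have hTsinvTs : ∀ v : H, Tsinv (Ts v) = v := fun v => by
    have := DFunLike.congr_fun hTsinv' v; simpa using this
  have hPinvP : Pinv (P Ωs) = Ωs := by
    have := DFunLike.congr_fun hP' Ωs; simpa using this
  have hPinvΩt : Pinv Ωt = Ωs := by rw [← hPΩ, hPinvP]
  simp only [comp_apply, hZΩ, hZ, hPinvΩt]
  rw [hTsTsinv]
  rw [← hTsinv_sa, adjoint_inner_right, hTsinvTs]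
  rw [adjoint_inner_right]
  conv_lhs => rw [show Tt (Tt (Y Ωt)) = adjoint Tt (Tt (Y Ωt)) from by rw [haTt]]
  rw [adjoint_inner_right]
end

section
/- Let Π be an invertible operator with Π Ω_s = Ω_t, (Π⁻¹)† Ω_s = Ω_t, and define the dual transport Π⋆ = T_t⁻² (Π⁻¹)† T_s². Then for all bounded operators X, Y one has (Π̂ X, Π̂⋆ Y)_t = (X, Y)_s, where Π̂ X = Π X Π⁻¹, Π̂⋆ Y = Π⋆ Y (Π⋆)⁻¹ and (A,B)_θ = ⟨T_θ A Ω_θ, T_θ B Ω_θ⟩. -/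
open ContinuousLinearMap

/-- the dual transport `Π⋆ = T_t⁻² (Π⁻¹)† T_s²` satisfies the duality
relation `(Π̂ X, Π̂⋆ Y)_t = (X, Y)_s`. -/
theorem stmt_2 {H : Type*} [NormedAddCommGroup H] [InnerProductSpace ℂ H] [CompleteSpace H]
    (Ts Tsinv Tt Ttinv : H →L[ℂ] H)
    (hTsinv : Ts ∘L Tsinv = 1) (hTsinv' : Tsinv ∘L Ts = 1)
    (hTtinv : Tt ∘L Ttinv = 1) (hTtinv' : Ttinv ∘L Tt = 1)
    (hTspos : Ts.IsPositive) (hTtpos : Tt.IsPositive)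
    (Ωs Ωt : H) (hΩs : ‖Ωs‖ = 1) (hΩt : ‖Ωt‖ = 1)
    (hTsΩ : Ts Ωs = Ωs) (hTtΩ : Tt Ωt = Ωt)
    (P Pinv : H →L[ℂ] H)
    (hP : P ∘L Pinv = 1) (hP' : Pinv ∘L P = 1)
    (hPΩ : P Ωs = Ωt) (hPadjΩ : (adjoint Pinv) Ωs = Ωt)
    (Pstar Pstarinv : H →L[ℂ] H)
    (hPstar : Pstar = Ttinv ∘L Ttinv ∘L (adjoint Pinv) ∘L Ts ∘L Ts)
    (hPstarinv : Pstar ∘L Pstarinv = 1) (hPstarinv' : Pstarinv ∘L Pstar = 1)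
    (X Y : H →L[ℂ] H) :
    (inner ℂ (Tt ((P ∘L X ∘L Pinv) Ωt)) (Tt ((Pstar ∘L Y ∘L Pstarinv) Ωt)) : ℂ)
      = inner ℂ (Ts (X Ωs)) (Ts (Y Ωs)) := by
  have hTs_sa : adjoint Ts = Ts := hTspos.isSelfAdjoint
  have hTt_sa : adjoint Tt = Tt := hTtpos.isSelfAdjoint
  have hTtTtinv : ∀ w, Tt (Ttinv w) = w := fun w => by
    rw [← comp_apply, hTtinv, ContinuousLinearMap.one_apply]
  have hTtinv_sa : adjoint Ttinv = Ttinv := by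
    have h1 : adjoint Ttinv ∘L Tt = 1 := by
      have h := congrArg adjoint hTtinv
      rwa [adjoint_comp, hTt_sa, one_def, adjoint_id, ← one_def] at h
    ext x
    have h2 := ContinuousLinearMap.ext_iff.mp h1 (Ttinv x)
    simpa [comp_apply, hTtTtinv] using h2
  have hTtinvTt : ∀ w, Ttinv (Tt w) = w := fun w => by
    rw [← comp_apply, hTtinv', ContinuousLinearMap.one_apply]
  have hPinvP : ∀ w, Pinv (P w) = w := fun w => by
    rw [← comp_apply, hP', ContinuousLinearMap.one_apply]
  have hPinvΩ : Pinv Ωt = Ωs := by rw [← hPΩ, hPinvP]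
  have hTtinvΩ : Ttinv Ωt = Ωt := by
    conv_lhs => rw [← hTtΩ]
    rw [hTtinvTt]
  have hPstarΩ : Pstar Ωs = Ωt := by
    rw [hPstar]
    simp only [comp_apply, hTsΩ, hPadjΩ, hTtinvΩ]
  have hPstarinvΩ : Pstarinv Ωt = Ωs := by
    rw [← hPstarΩ, ← comp_apply, hPstarinv', ContinuousLinearMap.one_apply]
  simp only [comp_apply, hPinvΩ, hPstarinvΩ]
  rw [hPstar]
  simp only [comp_apply, hTtTtinv]
  rw [← adjoint_inner_left Ttinv, hTtinv_sa, hTtinvTt, adjoint_inner_right, hPinvP,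
    ← adjoint_inner_left Ts, hTs_sa]
end

section
/- Let Π(γ^θ_p)^t_0 be differentiable transport operators with dual Π⋆(γ)^t_s = T_{γ_t}⁻² (Π(γ)^s_t)† T_{γ_s}², and vector potentials A_p, A⋆_p obtained as directional derivatives (A_p(θ) = iℏ d/dt Π(γ_p^θ)^t_0|_{t=0}, similarly for A⋆_p). Then T_θ A⋆_p(θ) T_θ⁻¹ − T_θ⁻¹ A_p(θ)† T_θ = −iℏ T_θ⁻¹ (∂ T_θ²/∂θ^p) T_θ⁻¹. -/
open ContinuousLinearMap

/-- relation between the quantum vector potential `A_p` and its dual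
`A⋆_p`:  `T A⋆_p T⁻¹ − T⁻¹ A_p† T = −iℏ T⁻¹ (∂_p T²) T⁻¹`. -/
theorem stmt_14 {n : ℕ} {H : Type*} [NormedAddCommGroup H] [InnerProductSpace ℂ H]
    [CompleteSpace H]
    (M : Set (Fin n → ℝ)) (hM : IsOpen M)
    (ℏ : ℝ) (hℏ : 0 < ℏ)
    (T Tinv : (Fin n → ℝ) → (H →L[ℂ] H))
    (hT : ∀ θ, T θ * Tinv θ = 1) (hT' : ∀ θ, Tinv θ * T θ = 1)
    (hTsa : ∀ θ, adjoint (T θ) = T θ)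
    (hTpos : ∀ θ, (T θ).IsPositive)
    (hTdiff : Differentiable ℝ T)
    -- transport operators `P p θ t = Π(γ_p^θ)^t_0` and their inverses `Π(γ_p^θ)^0_t`
    (P Pinv : Fin n → (Fin n → ℝ) → ℝ → (H →L[ℂ] H))
    (hP0 : ∀ p θ, P p θ 0 = 1) (hPinv0 : ∀ p θ, Pinv p θ 0 = 1)
    (hPinv : ∀ p θ t, P p θ t * Pinv p θ t = 1)
    (hPinv' : ∀ p θ t, Pinv p θ t * P p θ t = 1)
    (hPdiff : ∀ p θ, DifferentiableAt ℝ (fun t : ℝ => P p θ t) 0)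
    (hPinvdiff : ∀ p θ, DifferentiableAt ℝ (fun t : ℝ => Pinv p θ t) 0)
    -- dual transport `Π⋆(γ_p^θ)^t_0 = T_{θ+tg_p}⁻² (Π(γ_p^θ)^0_t)† T_θ²`
    (Pstar : Fin n → (Fin n → ℝ) → ℝ → (H →L[ℂ] H))
    (hPstar : ∀ p θ t, Pstar p θ t
      = Tinv (θ + t • (Pi.single p 1 : Fin n → ℝ)) * Tinv (θ + t • (Pi.single p 1 : Fin n → ℝ))
          * adjoint (Pinv p θ t) * (T θ * T θ))
    (A Astar : Fin n → (Fin n → ℝ) → (H →L[ℂ] H))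
    (hA : ∀ p θ, A p θ = (Complex.I * (ℏ : ℂ)) • deriv (fun t : ℝ => P p θ t) 0)
    (hAstar : ∀ p θ, Astar p θ = (Complex.I * (ℏ : ℂ)) • deriv (fun t : ℝ => Pstar p θ t) 0)
    (θ : Fin n → ℝ) (hθ : θ ∈ M) (p : Fin n) :
    T θ * Astar p θ * Tinv θ - Tinv θ * adjoint (A p θ) * T θ
      = -((Complex.I * (ℏ : ℂ))
          • (Tinv θ * fderiv ℝ (fun ϑ => T ϑ * T ϑ) θ (Pi.single p 1) * Tinv θ)) := by
  set z : ℂ := Complex.I * (ℏ : ℂ) with hz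
  set a := T θ with ha
  set b := Tinv θ with hb
  set D := fderiv ℝ (fun ϑ => T ϑ * T ϑ) θ (Pi.single p 1) with hDdef
  -- the straight-line curve
  have hc : HasDerivAt (fun t : ℝ => θ + t • (Pi.single p 1 : Fin n → ℝ))
      (Pi.single p 1 : Fin n → ℝ) 0 := by
    simpa using (((hasDerivAt_id (0 : ℝ)).smul_const (Pi.single p 1 : Fin n → ℝ)).const_add θ)
  have hc0 : θ + (0 : ℝ) • (Pi.single p 1 : Fin n → ℝ) = θ := by simp
  -- `T ϑ * T ϑ` is a unit with inverse `Tinv ϑ * Tinv ϑ`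
  have hsq : ∀ ϑ, (T ϑ * T ϑ) * (Tinv ϑ * Tinv ϑ) = 1 := fun ϑ => by
    rw [mul_assoc, ← mul_assoc (T ϑ) (Tinv ϑ), hT, one_mul, hT]
  have hsq' : ∀ ϑ, (Tinv ϑ * Tinv ϑ) * (T ϑ * T ϑ) = 1 := fun ϑ => by
    rw [mul_assoc, ← mul_assoc (Tinv ϑ) (T ϑ), hT', one_mul, hT']
  let u : ∀ ϑ, (H →L[ℂ] H)ˣ := fun ϑ => ⟨T ϑ * T ϑ, Tinv ϑ * Tinv ϑ, hsq ϑ, hsq' ϑ⟩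
  have hRinv : ∀ ϑ, Ring.inverse (T ϑ * T ϑ) = Tinv ϑ * Tinv ϑ := fun ϑ =>
    Ring.inverse_unit (u ϑ)
  -- derivative of `T² ∘ c`
  have hTsq : DifferentiableAt ℝ (fun ϑ => T ϑ * T ϑ) θ := (hTdiff θ).mul (hTdiff θ)
  have hTsqc : HasDerivAt
      (fun t : ℝ => T (θ + t • (Pi.single p 1 : Fin n → ℝ))
          * T (θ + t • (Pi.single p 1 : Fin n → ℝ))) D 0 := by
    have h := HasFDerivAt.comp_hasDerivAt 0
      (by rw [hc0]; exact hTsq.hasFDerivAt) hc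
    exact h
  -- derivative of `Tinv² ∘ c`
  have hS : HasDerivAt
      (fun t : ℝ => Tinv (θ + t • (Pi.single p 1 : Fin n → ℝ))
          * Tinv (θ + t • (Pi.single p 1 : Fin n → ℝ))) (-((b * b) * D * (b * b))) 0 := by
    have hinv : HasFDerivAt Ring.inverse
        (-(ContinuousLinearMap.mulLeftRight ℝ (H →L[ℂ] H) (b * b) (b * b)))
        (T (θ + (0 : ℝ) • (Pi.single p 1 : Fin n → ℝ))
          * T (θ + (0 : ℝ) • (Pi.single p 1 : Fin n → ℝ))) := by
      rw [hc0]; exact hasFDerivAt_ringInverse (u θ)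
    have h := hinv.comp_hasDerivAt 0 hTsqc
    have h2 : (fun t : ℝ => Ring.inverse
        (T (θ + t • (Pi.single p 1 : Fin n → ℝ)) * T (θ + t • (Pi.single p 1 : Fin n → ℝ))))
        = fun t : ℝ => Tinv (θ + t • (Pi.single p 1 : Fin n → ℝ))
            * Tinv (θ + t • (Pi.single p 1 : Fin n → ℝ)) := by
      funext t; rw [hRinv]
    simpa [Function.comp_def, h2, ContinuousLinearMap.mulLeftRight_apply] using h
  -- derivative of `Pinv`
  set P' := deriv (fun t : ℝ => P p θ t) 0 with hP'def
  have hP' : HasDerivAt (fun t : ℝ => P p θ t) P' 0 := (hPdiff p θ).hasDerivAt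
  have hPi' : HasDerivAt (fun t : ℝ => Pinv p θ t) (-P') 0 := by
    have hPi : HasDerivAt (fun t : ℝ => Pinv p θ t) (deriv (fun t : ℝ => Pinv p θ t) 0) 0 :=
      (hPinvdiff p θ).hasDerivAt
    have hmul : HasDerivAt (fun t : ℝ => Pinv p θ t * P p θ t)
        (deriv (fun t : ℝ => Pinv p θ t) 0 * P p θ 0 + Pinv p θ 0 * P') 0 := hPi.mul hP'
    have hone : (fun t : ℝ => Pinv p θ t * P p θ t) = fun _ : ℝ => (1 : H →L[ℂ] H) := by
      funext t; exact hPinv' p θ t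
    rw [hone] at hmul
    have h0 := (hasDerivAt_const (0 : ℝ) (1 : H →L[ℂ] H)).unique hmul
    rw [hP0, hPinv0, mul_one, one_mul] at h0
    have hd : deriv (fun t : ℝ => Pinv p θ t) 0 = -P' :=
      eq_neg_of_add_eq_zero_left h0.symm
    rw [← hd]; exact hPi
  -- derivative of the adjoint of `Pinv`
  have hQ : HasDerivAt (fun t : ℝ => adjoint (Pinv p θ t)) (-(adjoint P')) 0 := by
    have h := hPi'.star
    have h2 : (fun t : ℝ => star (Pinv p θ t)) = fun t : ℝ => adjoint (Pinv p θ t) := by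
      funext t; rw [star_eq_adjoint]
    rw [h2] at h
    simpa [star_eq_adjoint] using h
  -- derivative of Pstar
  have hPs : (fun t : ℝ => Pstar p θ t)
      = fun t : ℝ => (Tinv (θ + t • (Pi.single p 1 : Fin n → ℝ))
          * Tinv (θ + t • (Pi.single p 1 : Fin n → ℝ)))
          * adjoint (Pinv p θ t) * (T θ * T θ) := by
    funext t; rw [hPstar]
  have key : deriv (fun t : ℝ => Pstar p θ t) 0
      = (-((b * b) * D * (b * b)) + (b * b) * -(adjoint P')) * (a * a) := by
    have h := (hS.mul hQ).mul_const (T θ * T θ)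
    change HasDerivAt (fun t : ℝ => Tinv (θ + t • (Pi.single p 1 : Fin n → ℝ))
        * Tinv (θ + t • (Pi.single p 1 : Fin n → ℝ)) * adjoint (Pinv p θ t) * (T θ * T θ)) _ 0 at h
    rw [← hPs] at h
    rw [h.deriv]
    simp [hc0, hPinv0 p θ, ← star_eq_adjoint, ← ha, ← hb]
  -- adjoint of A
  have hadjA : adjoint (A p θ) = (-z) • adjoint P' := by
    rw [hA p θ, ← hP'def, ← star_eq_adjoint, star_smul, ← star_eq_adjoint]
    congr 1
    rw [hz]
    simp [Complex.ext_iff]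
  -- assemble
  rw [hAstar p θ, key, hadjA]
  have h1 : a * b = 1 := hT θ
  have h2 : b * a = 1 := hT' θ
  have hab : ∀ x : H →L[ℂ] H, a * (b * x) = x := fun x => by
    rw [← mul_assoc, h1, one_mul]
  have hba : ∀ x : H →L[ℂ] H, b * (a * x) = x := fun x => by
    rw [← mul_assoc, h2, one_mul]
  simp only [smul_mul_assoc, mul_smul_comm, neg_smul, sub_neg_eq_add, ← smul_add, ← smul_neg]
  congr 1
  simp [mul_assoc, mul_add, add_mul, mul_neg, neg_mul, h1, h2, hab, hba]
end
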